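/- If G and H are graphs on vertex sets with intersection inducing a clique of size 2 or 3 in both (i.e., G ∩ H is isomorphic to K2 or K3), and neither G nor H has a stable cutset, then G ∪ H has no stable cutset. -/

import Mathlib

open SimpleGraph

/-- `S` is a stable cutset of `G`: an independent set whose removal disconnects `G`. -/
def SimpleGraph.IsStableCutset {V : Type*} (G : SimpleGraph V) (S : Set V) : Prop :=
  (∀ a ∈ S, ∀ b ∈ S, ¬ G.Adj a b) ∧ ¬ (G.induce Sᶜ).Preconnected

def SimpleGraph.HasStableCutset {V : Type*} (G : SimpleGraph V) : Prop :=
  ∃ S : Set V, G.IsStableCutset S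

/-- The cycle on six vertices. -/
def CycleSix : SimpleGraph (Fin 6) := SimpleGraph.fromRel (fun i j => j = i + 1)

/-- The complement of `C₆`, i.e. the triangular prism. -/
def PrismGraph : SimpleGraph (Fin 6) := CycleSixᶜ

/-- Graphs on (subsets of) a fixed ambient vertex type `α`, with graph-wise
union and intersection given by the lattice structure. -/
abbrev AmbGraph (α : Type*) := SimpleGraph.Subgraph (⊤ : SimpleGraph α)

def IsK2 {α : Type*} (H : AmbGraph α) : Prop :=
  Nonempty (H.coe ≃g (⊤ : SimpleGraph (Fin 2)))

def IsK3 {α : Type*} (H : AmbGraph α) : Prop :=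
  Nonempty (H.coe ≃g (⊤ : SimpleGraph (Fin 3)))

def IsPrism {α : Type*} (H : AmbGraph α) : Prop :=
  Nonempty (H.coe ≃g PrismGraph)

/-- The class `G_sc` of Le and Pfender. -/
inductive Gsc {α : Type*} : AmbGraph α → Prop
  | k3 (H : AmbGraph α) : IsK3 H → Gsc H
  | prism (H : AmbGraph α) : IsPrism H → Gsc H
  | union (G H : AmbGraph α) : Gsc G → Gsc H →
      (IsK2 (G ⊓ H) ∨ IsK3 (G ⊓ H)) → Gsc (G ⊔ H)

/-- Reachability in `K.coe.induce Sᶜ` between two vertices of a subgraph `G ≤ K`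
that has no stable cutset, provided `S` is independent in `K.coe`. -/
lemma aux_reach {α : Type*} {G K : AmbGraph α} (hGK : G ≤ K)
    (hG : ¬ G.coe.HasStableCutset) (S : Set ↥K.verts)
    (hS : ∀ a ∈ S, ∀ b ∈ S, ¬ K.coe.Adj a b)
    (u w : ↥K.verts) (hu : ↑u ∈ G.verts) (hw : ↑w ∈ G.verts)
    (huS : u ∉ S) (hwS : w ∉ S) :
    (K.coe.induce Sᶜ).Reachable ⟨u, huS⟩ ⟨w, hwS⟩ := by
  set S' : Set ↥G.verts := {a | (⟨↑a, hGK.1 a.2⟩ : ↥K.verts) ∈ S} with hS'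
  have hindep : ∀ a ∈ S', ∀ b ∈ S', ¬ G.coe.Adj a b := by
    intro a ha b hb hab
    exact hS _ ha _ hb (by simpa using hGK.2 (by simpa using hab))
  have hpre : (G.coe.induce S'ᶜ).Preconnected := by
    by_contra h
    exact hG ⟨S', hindep, h⟩
  have hmemu : (⟨↑u, hu⟩ : ↥G.verts) ∈ S'ᶜ := by
    simp only [hS', Set.mem_compl_iff, Set.mem_setOf_eq]
    convert huS using 2
  have hmemw : (⟨↑w, hw⟩ : ↥G.verts) ∈ S'ᶜ := by
    simp only [hS', Set.mem_compl_iff, Set.mem_setOf_eq]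
    convert hwS using 2
  have r := hpre ⟨⟨↑u, hu⟩, hmemu⟩ ⟨⟨↑w, hw⟩, hmemw⟩
  let f : G.coe.induce S'ᶜ →g K.coe.induce Sᶜ :=
    ⟨fun a => ⟨⟨(a : ↥G.verts).1, hGK.1 (a : ↥G.verts).2⟩, a.2⟩, by
      intro a b hab
      simp only [comap_adj, Function.Embedding.coe_subtype, Subgraph.coe_adj] at hab ⊢
      exact hGK.2 hab⟩
  have r' := r.map f
  convert r' using 2 <;> exact rfl

/-- Edge or triangle identification of two graphs without stable cutsets
produces a graph without a stable cutset. -/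
theorem union_no_stableCutset {α : Type*} (G H : AmbGraph α)
    (hint : IsK2 (G ⊓ H) ∨ IsK3 (G ⊓ H))
    (hGH : (G.verts \ H.verts).Nonempty) (hHG : (H.verts \ G.verts).Nonempty)
    (hG : ¬ G.coe.HasStableCutset) (hH : ¬ H.coe.HasStableCutset) :
    ¬ (G ⊔ H).coe.HasStableCutset := by
  rintro ⟨S, hS, hnc⟩
  apply hnc
  -- get an edge of G ⊓ H
  obtain ⟨x, y, hxy⟩ : ∃ x y : ↥(G ⊓ H).verts, (G ⊓ H).coe.Adj x y := by
    rcases hint with h | h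
    · obtain ⟨e⟩ := (h : Nonempty _)
      exact ⟨e.symm 0, e.symm 1, e.symm.map_adj_iff.2 (by decide)⟩
    · obtain ⟨e⟩ := (h : Nonempty _)
      exact ⟨e.symm 0, e.symm 1, e.symm.map_adj_iff.2 (by decide)⟩
  rw [Subgraph.coe_adj, Subgraph.inf_adj] at hxy
  have hxv : (↑x : α) ∈ G.verts ∩ H.verts := le_of_eq (Subgraph.verts_inf G H) x.2
  have hyv : (↑y : α) ∈ G.verts ∩ H.verts := le_of_eq (Subgraph.verts_inf G H) y.2
  have hxK : (↑x : α) ∈ (G ⊔ H).verts :=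
    le_of_eq (Subgraph.verts_sup G H).symm (Or.inl hxv.1)
  have hyK : (↑y : α) ∈ (G ⊔ H).verts :=
    le_of_eq (Subgraph.verts_sup G H).symm (Or.inl hyv.1)
  set x' : ↥(G ⊔ H).verts := ⟨↑x, hxK⟩
  set y' : ↥(G ⊔ H).verts := ⟨↑y, hyK⟩
  have hadj : (G ⊔ H).coe.Adj x' y' := by
    rw [Subgraph.coe_adj, Subgraph.sup_adj]; exact Or.inl hxy.1
  -- one of x', y' avoids S
  have hw : ∃ w : ↥(G ⊔ H).verts, w ∉ S ∧ (↑w : α) ∈ G.verts ∩ H.verts := by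
    by_cases hx : x' ∈ S
    · by_cases hy : y' ∈ S
      · exact absurd hadj (hS _ hx _ hy)
      · exact ⟨y', hy, hyv⟩
    · exact ⟨x', hx, hxv⟩
  obtain ⟨w, hwS, hwG, hwH⟩ := hw
  -- preconnectedness
  intro u v
  have key : ∀ z : ↥(Sᶜ : Set ↥(G ⊔ H).verts),
      ((G ⊔ H).coe.induce Sᶜ).Reachable z ⟨w, hwS⟩ := by
    intro z
    have hz : (↑↑z : α) ∈ G.verts ∪ H.verts :=
      le_of_eq (Subgraph.verts_sup G H) (z : ↥(G ⊔ H).verts).2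
    have hzS : (z : ↥(G ⊔ H).verts) ∉ S := z.2
    rcases hz with hzG | hzH
    · exact aux_reach le_sup_left hG S hS (z : ↥(G ⊔ H).verts) w hzG hwG hzS hwS
    · exact aux_reach le_sup_right hH S hS (z : ↥(G ⊔ H).verts) w hzH hwH hzS hwS
  exact (key u).trans (key v).symm
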